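/- Fix integers 0 ≤ d₀ < d and a real number C > 0. Then there exist c > 0 and ε > 0 with the following property: for every x ∈ ℝᵈ with |x| < ε and every family of real numbers (γᵏᵢⱼ)_{i,j,k ∈ {1,…,d}} satisfying γᵏᵢⱼ = γᵏⱼᵢ, |γᵏᵢⱼ| ≤ C for all i, j, k, and |γᵏᵢⱼ| ≤ C|x̂| whenever i, j ≤ d₀ and k > d₀, the symmetric d×d matrix H with entries H_{ij} = (D²f_c(x))_{ij} − Σ_{k=1}^{d} γᵏᵢⱼ (∂f_c/∂x_k)(x) is positive semidefinite; moreover H is positive definite whenever x̂ ≠ 0. -/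

import Mathlib

open scoped BigOperators
open Finset Matrix

/-- `|x̃|²`: squared Euclidean norm of the first `d₀` components of `x`. -/
def tildeSq (d₀ : ℕ) {d : ℕ} (x : EuclideanSpace ℝ (Fin d)) : ℝ :=
  ∑ i : Fin d, if (i : ℕ) < d₀ then x i ^ 2 else 0

/-- `|x̂|²`: squared Euclidean norm of the last `d − d₀` components of `x`. -/
def hatSq (d₀ : ℕ) {d : ℕ} (x : EuclideanSpace ℝ (Fin d)) : ℝ :=
  ∑ i : Fin d, if d₀ ≤ (i : ℕ) then x i ^ 2 else 0

/-- The gradient of `f_c(x) = ½ (c + |x̃|²)|x̂|²`: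
`∂f_c/∂x_k = x_k |x̂|²` for `k ≤ d₀` and `x_k (c + |x̃|²)` for `k > d₀`. -/
def gradFc (c : ℝ) (d₀ : ℕ) {d : ℕ} (x : EuclideanSpace ℝ (Fin d)) (k : Fin d) : ℝ :=
  if (k : ℕ) < d₀ then x k * hatSq d₀ x else x k * (c + tildeSq d₀ x)

/-- The Hessian matrix `D²f_c(x)` of `f_c(x) = ½ (c + |x̃|²)|x̂|²`: entries
`δᵢⱼ|x̂|²` for `i, j ≤ d₀`, `2xᵢxⱼ` if exactly one of `i, j` is `≤ d₀`, and
`δᵢⱼ(c + |x̃|²)` for `i, j > d₀`. -/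
def hessFc (c : ℝ) (d₀ : ℕ) {d : ℕ} (x : EuclideanSpace ℝ (Fin d)) :
    Matrix (Fin d) (Fin d) ℝ :=
  Matrix.of fun i j =>
    if (i : ℕ) < d₀ then
      (if (j : ℕ) < d₀ then (if i = j then hatSq d₀ x else 0) else 2 * x i * x j)
    else
      (if (j : ℕ) < d₀ then 2 * x i * x j else (if i = j then c + tildeSq d₀ x else 0))

private lemma key_ineq (c ε a t p q T U E B : ℝ)
    (ha : 0 ≤ a) (hp : 0 ≤ p) (hq : 0 ≤ q) (hεa : a ≤ ε)
    (hB : 0 ≤ B) (hT : |T| ≤ ε * p) (hU : |U| ≤ a * q)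
    (hE : |E| ≤ (1/2) * a^2 * p^2 + B * a * (p*q) + B * a * q^2)
    (hnum : (4*ε + B)^2 + B * ε ≤ c/2) :
    (1/4) * a^2 * p^2 + (c/2) * q^2 ≤ a^2*p^2 + 4*(T*U) + (c + t^2)*q^2 - E := by
  have hε : 0 ≤ ε := ha.trans hεa
  have h1 : |T*U| ≤ (ε*p)*(a*q) := by
    rw [abs_mul]; exact mul_le_mul hT hU (abs_nonneg _) (by positivity)
  have hTU : -(4*(ε*p)*(a*q)) ≤ 4*(T*U) := by
    have := neg_abs_le (T*U); nlinarith
  have hEb : E ≤ (1/2)*a^2*p^2 + B*a*(p*q) + B*a*q^2 := le_trans (le_abs_self E) hE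
  nlinarith [sq_nonneg (a*p - 2*(4*ε+B)*q),
    mul_nonneg (mul_nonneg hB (sub_nonneg.2 hεa)) (sq_nonneg q),
    mul_nonneg (sq_nonneg t) (sq_nonneg q), sq_nonneg q,
    mul_nonneg (mul_nonneg ha hp) hq, mul_nonneg hB (mul_nonneg ha hq)]

private lemma quad_expand {d : ℕ} (M : Matrix (Fin d) (Fin d) ℝ) (v : Fin d → ℝ) :
    dotProduct (star v) (M *ᵥ v) = ∑ i : Fin d, ∑ j : Fin d, v i * M i j * v j := by
  simp only [dotProduct, Matrix.mulVec, Pi.star_apply, star_trivial, Finset.mul_sum, mul_assoc]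

private lemma quad_hess (c : ℝ) (d₀ : ℕ) {d : ℕ} (x : EuclideanSpace ℝ (Fin d))
    (v : Fin d → ℝ) :
    ∑ i : Fin d, ∑ j : Fin d, v i * hessFc c d₀ x i j * v j
      = hatSq d₀ x * (∑ i : Fin d, if (i:ℕ) < d₀ then v i ^ 2 else 0)
        + 4 * (∑ i : Fin d, if (i:ℕ) < d₀ then x i * v i else 0)
            * (∑ i : Fin d, if d₀ ≤ (i:ℕ) then x i * v i else 0)
        + (c + tildeSq d₀ x) * (∑ i : Fin d, if d₀ ≤ (i:ℕ) then v i ^ 2 else 0) := by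
  set a2 := hatSq d₀ x
  set t2 := tildeSq d₀ x
  set T := ∑ i : Fin d, if (i:ℕ) < d₀ then x i * v i else 0 with hT
  set U := ∑ i : Fin d, if d₀ ≤ (i:ℕ) then x i * v i else 0 with hU
  have inner : ∀ i : Fin d, (∑ j : Fin d, v i * hessFc c d₀ x i j * v j)
      = if (i:ℕ) < d₀ then a2 * (v i * v i) + (2 * (x i * v i)) * U
        else (2 * (x i * v i)) * T + (c + t2) * (v i * v i) := by
    intro i
    by_cases hi : (i:ℕ) < d₀
    · rw [if_pos hi]
      have step : ∀ j : Fin d, v i * hessFc c d₀ x i j * v j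
          = (if j = i then a2 * (v i * v i) else 0)
            + (2 * (x i * v i)) * (if d₀ ≤ (j:ℕ) then x j * v j else 0) := by
        intro j
        by_cases hj : (j:ℕ) < d₀
        · by_cases hij : j = i
          · subst hij; simp [hessFc, hi, hj, Nat.not_le.mpr hj]; ring
          · have : ¬ (i = j) := fun h => hij h.symm
            simp [hessFc, hi, hj, hij, this, Nat.not_le.mpr hj]
        · have hij : ¬ (j = i) := by rintro rfl; exact hj hi
          have : ¬ (i = j) := fun h => hij h.symm
          simp [hessFc, hi, hj, hij, Nat.not_lt.mp hj]
          ring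
      rw [Finset.sum_congr rfl fun j _ => step j, Finset.sum_add_distrib,
        Finset.sum_ite_eq' univ i, ← Finset.mul_sum]
      simp [hU]
    · rw [if_neg hi]
      have step : ∀ j : Fin d, v i * hessFc c d₀ x i j * v j
          = (2 * (x i * v i)) * (if (j:ℕ) < d₀ then x j * v j else 0)
            + (if j = i then (c + t2) * (v i * v i) else 0) := by
        intro j
        by_cases hj : (j:ℕ) < d₀
        · have hij : ¬ (j = i) := by rintro rfl; exact hi hj
          simp [hessFc, hi, hj, hij]
          ring
        · by_cases hij : j = i
          · subst hij; simp [hessFc, hi, hj]; ring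
          · have : ¬ (i = j) := fun h => hij h.symm
            simp [hessFc, hi, hj, hij, this]
      rw [Finset.sum_congr rfl fun j _ => step j, Finset.sum_add_distrib,
        Finset.sum_ite_eq' univ i, ← Finset.mul_sum]
      simp [hT]
  rw [Finset.sum_congr rfl fun i _ => inner i]
  have split : ∀ i : Fin d,
      (if (i:ℕ) < d₀ then a2 * (v i * v i) + (2 * (x i * v i)) * U
        else (2 * (x i * v i)) * T + (c + t2) * (v i * v i))
      = a2 * (if (i:ℕ) < d₀ then v i ^ 2 else 0)
        + (if (i:ℕ) < d₀ then x i * v i else 0) * (2 * U)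
        + (if d₀ ≤ (i:ℕ) then x i * v i else 0) * (2 * T)
        + (c + t2) * (if d₀ ≤ (i:ℕ) then v i ^ 2 else 0) := by
    intro i
    by_cases hi : (i:ℕ) < d₀
    · simp [hi, Nat.not_le.mpr hi]; ring
    · simp [hi, Nat.not_lt.mp hi]; ring
  rw [Finset.sum_congr rfl fun i _ => split i]
  rw [Finset.sum_add_distrib, Finset.sum_add_distrib, Finset.sum_add_distrib,
    ← Finset.mul_sum, ← Finset.mul_sum, ← Finset.sum_mul, ← Finset.sum_mul]
  ring

private lemma err_bound {d : ℕ} (d₀ : ℕ) (v : Fin d → ℝ) (e : Fin d → Fin d → ℝ) (E1 E2 : ℝ)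
    (hE1 : 0 ≤ E1) (hE2 : 0 ≤ E2)
    (h1 : ∀ i j : Fin d, (i:ℕ) < d₀ → (j:ℕ) < d₀ → |e i j| ≤ E1)
    (h2 : ∀ i j : Fin d, |e i j| ≤ E2) :
    |∑ i : Fin d, ∑ j : Fin d, v i * e i j * v j|
      ≤ E1 * (∑ i : Fin d, if (i:ℕ) < d₀ then |v i| else 0) ^ 2
        + 2 * E2 * ((∑ i : Fin d, if (i:ℕ) < d₀ then |v i| else 0)
            + (∑ i : Fin d, if d₀ ≤ (i:ℕ) then |v i| else 0))
          * (∑ i : Fin d, if d₀ ≤ (i:ℕ) then |v i| else 0) := by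
  set S1 := ∑ i : Fin d, if (i:ℕ) < d₀ then |v i| else 0 with hS1
  set S2 := ∑ i : Fin d, if d₀ ≤ (i:ℕ) then |v i| else 0 with hS2
  set A : Fin d → ℝ := fun i => if (i:ℕ) < d₀ then |v i| else 0 with hA
  set Ah : Fin d → ℝ := fun i => if d₀ ≤ (i:ℕ) then |v i| else 0 with hAh
  have hSA : (∑ i : Fin d, |v i|) = S1 + S2 := by
    rw [hS1, hS2, ← Finset.sum_add_distrib]
    refine Finset.sum_congr rfl fun i _ => ?_
    by_cases hi : (i:ℕ) < d₀ <;> simp [hi, Nat.not_le.mpr, Nat.not_lt.mp]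
  have pb : ∀ i j : Fin d, |v i * e i j * v j|
      ≤ (E1 * A i) * A j + (E2 * Ah i) * |v j| + (E2 * |v i|) * Ah j := by
    intro i j
    rw [abs_mul, abs_mul]
    by_cases hi : (i:ℕ) < d₀
    · by_cases hj : (j:ℕ) < d₀
      · have : |v i| * |e i j| * |v j| ≤ |v i| * E1 * |v j| :=
          mul_le_mul_of_nonneg_right
            (mul_le_mul_of_nonneg_left (h1 i j hi hj) (abs_nonneg _)) (abs_nonneg _)
        simp only [hA, hAh, if_pos hi, if_pos hj, if_neg (Nat.not_le.mpr hi),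
          if_neg (Nat.not_le.mpr hj)]
        nlinarith [abs_nonneg (v i), abs_nonneg (v j)]
      · have : |v i| * |e i j| * |v j| ≤ |v i| * E2 * |v j| :=
          mul_le_mul_of_nonneg_right
            (mul_le_mul_of_nonneg_left (h2 i j) (abs_nonneg _)) (abs_nonneg _)
        simp only [hA, hAh, if_pos hi, if_pos (Nat.not_lt.mp hj),
          if_neg (Nat.not_le.mpr hi), if_neg hj]
        nlinarith [abs_nonneg (v i), abs_nonneg (v j), mul_nonneg hE2 (abs_nonneg (v i))]
    · have : |v i| * |e i j| * |v j| ≤ |v i| * E2 * |v j| :=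
        mul_le_mul_of_nonneg_right
          (mul_le_mul_of_nonneg_left (h2 i j) (abs_nonneg _)) (abs_nonneg _)
      have hAj : 0 ≤ Ah j := by rw [hAh]; dsimp; split <;> simp [abs_nonneg]
      have hAi : 0 ≤ A i := by rw [hA]; dsimp; split <;> simp [abs_nonneg]
      have hAj' : 0 ≤ A j := by rw [hA]; dsimp; split <;> simp [abs_nonneg]
      have : (E2 * Ah i) * |v j| = E2 * |v i| * |v j| := by
        rw [hAh]; simp [if_pos (Nat.not_lt.mp hi)]
      nlinarith [abs_nonneg (v i), abs_nonneg (v j), mul_nonneg hE1 (mul_nonneg hAi hAj'),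
        mul_nonneg (mul_nonneg hE2 (abs_nonneg (v i))) hAj,
        mul_le_mul_of_nonneg_right (mul_le_mul_of_nonneg_left (h2 i j) (abs_nonneg (v i)))
          (abs_nonneg (v j))]
  calc |∑ i : Fin d, ∑ j : Fin d, v i * e i j * v j|
      ≤ ∑ i : Fin d, |∑ j : Fin d, v i * e i j * v j| := Finset.abs_sum_le_sum_abs _ _
    _ ≤ ∑ i : Fin d, ∑ j : Fin d, |v i * e i j * v j| :=
        Finset.sum_le_sum fun i _ => Finset.abs_sum_le_sum_abs _ _
    _ ≤ ∑ i : Fin d, ∑ j : Fin d,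
          ((E1 * A i) * A j + (E2 * Ah i) * |v j| + (E2 * |v i|) * Ah j) :=
        Finset.sum_le_sum fun i _ => Finset.sum_le_sum fun j _ => pb i j
    _ = (∑ i : Fin d, ∑ j : Fin d, (E1 * A i) * A j)
          + ((∑ i : Fin d, ∑ j : Fin d, (E2 * Ah i) * |v j|)
            + (∑ i : Fin d, ∑ j : Fin d, (E2 * |v i|) * Ah j)) := by
        simp [Finset.sum_add_distrib, add_assoc]
    _ = ((∑ i : Fin d, E1 * A i) * ∑ j : Fin d, A j)
          + (((∑ i : Fin d, E2 * Ah i) * ∑ j : Fin d, |v j|)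
            + ((∑ i : Fin d, E2 * |v i|) * ∑ j : Fin d, Ah j)) := by
        rw [← Finset.sum_mul_sum, ← Finset.sum_mul_sum, ← Finset.sum_mul_sum]
    _ = E1 * S1 ^ 2 + 2 * E2 * (S1 + S2) * S2 := by
        rw [← Finset.mul_sum, ← Finset.mul_sum, ← Finset.mul_sum, hSA]
        rw [hS1, hS2, hA, hAh]
        ring

set_option maxHeartbeats 2000000 in
/-- Quantitative heart of Proposition 7.1: given `0 ≤ d₀ < d` and `C > 0`, there are
`c > 0` and `ε > 0` such that for every `x` with `|x| < ε` and every symmetric family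
`γᵏᵢⱼ` with `|γᵏᵢⱼ| ≤ C`, and `|γᵏᵢⱼ| ≤ C|x̂|` whenever `i, j ≤ d₀ < k`, the matrix
`Hᵢⱼ = (D²f_c(x))ᵢⱼ − Σₖ γᵏᵢⱼ ∂f_c/∂x_k (x)` is positive semidefinite, and positive
definite whenever `x̂ ≠ 0`. -/
theorem exists_c_eps_posSemidef_hessian
    (d₀ d : ℕ) (hd : d₀ < d) (C : ℝ) (hC : 0 < C) :
    ∃ c > (0 : ℝ), ∃ ε > (0 : ℝ),
      ∀ x : EuclideanSpace ℝ (Fin d), ‖x‖ < ε →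
      ∀ γ : Fin d → Fin d → Fin d → ℝ,
        (∀ k i j, γ k i j = γ k j i) →
        (∀ k i j, |γ k i j| ≤ C) →
        (∀ (k i j : Fin d), (i : ℕ) < d₀ → (j : ℕ) < d₀ → d₀ ≤ (k : ℕ) →
          |γ k i j| ≤ C * Real.sqrt (hatSq d₀ x)) →
        (Matrix.of fun i j : Fin d =>
            hessFc c d₀ x i j - ∑ k : Fin d, γ k i j * gradFc c d₀ x k).PosSemidef ∧
        ((∃ i : Fin d, d₀ ≤ (i : ℕ) ∧ x i ≠ 0) →
          (Matrix.of fun i j : Fin d =>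
            hessFc c d₀ x i j - ∑ k : Fin d, γ k i j * gradFc c d₀ x k).PosDef) := by
  -- constants
  have hdnn : (0:ℝ) ≤ (d:ℝ) := Nat.cast_nonneg d
  obtain ⟨e, he1, hCd⟩ : ∃ e : ℝ, 1 ≤ e ∧ C * (d:ℝ)^2 ≤ e := by
    refine ⟨(C + 1) * ((d:ℝ) + 1)^2, ?_, ?_⟩
    · nlinarith [mul_nonneg hC.le hdnn, mul_nonneg (mul_nonneg hC.le hdnn) hdnn,
        mul_nonneg hdnn hdnn]
    · nlinarith [mul_nonneg hC.le hdnn, mul_nonneg hdnn hdnn]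
  have hepos : 0 < e := lt_of_lt_of_le one_pos he1
  obtain ⟨c, hc, hce⟩ : ∃ c : ℝ, 0 < c ∧ c * (1000 * e^2) = 1 := by
    refine ⟨1 / (1000 * e^2), by positivity, ?_⟩
    field_simp
  have hec : e * c ≤ 1/1000 := by
    have hpr : 0 ≤ (e * c) * (e - 1) :=
      mul_nonneg (mul_nonneg hepos.le hc.le) (by linarith)
    linarith [hce, hpr]
  have hcec : c ≤ e * c := by
    nlinarith [mul_nonneg (show (0:ℝ) ≤ e - 1 by linarith) hc.le]
  have hc1 : c ≤ 1/1000 := le_trans hcec hec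
  have hCd0 : (0:ℝ) ≤ C * (d:ℝ)^2 := by positivity
  have hCdc : C * (d:ℝ)^2 * c ≤ 1/1000 :=
    le_trans (mul_le_mul_of_nonneg_right hCd hc.le) hec
  have hN1 : (d:ℝ) * ((d:ℝ) * (C * (2*c + c^2))) ≤ 1/2 := by
    have k1 : C * (d:ℝ)^2 * c * c ≤ (1/1000) * c :=
      mul_le_mul_of_nonneg_right hCdc hc.le
    have k2 : (1/1000) * c ≤ (1/1000) * (1/1000) := by linarith
    linarith [hCdc, k1, k2]
  set B : ℝ := 2 * (d:ℝ) * ((d:ℝ) * (C * (c + 2*c^2))) with hB_def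
  have hBnn : 0 ≤ B := by
    have : (0:ℝ) ≤ c + 2*c^2 := by positivity
    rw [hB_def]; positivity
  have hecc : e^2 * c^2 = c/1000 := by linear_combination (c/1000) * hce
  have hBec : B ≤ 6 * (e * c) := by
    have h1 : C * (d:ℝ)^2 * c ≤ e * c := mul_le_mul_of_nonneg_right hCd hc.le
    have h2 : C * (d:ℝ)^2 * c^2 ≤ e * c^2 :=
      mul_le_mul_of_nonneg_right hCd (sq_nonneg c)
    have h3 : 0 ≤ e * c * (1 - c) :=
      mul_nonneg (mul_nonneg hepos.le hc.le) (by linarith)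
    rw [hB_def]; nlinarith [h1, h2, h3]
  have h4B : 4*c + B ≤ 10 * (e*c) := by linarith [hBec, hcec]
  have h4Bnn : 0 ≤ 4*c + B := by linarith [hc.le, hBnn]
  have hN2 : (4*c + B)^2 + B * c ≤ c/2 := by
    have hm : (4*c+B)*(4*c+B) ≤ (10*(e*c))*(10*(e*c)) :=
      mul_self_le_mul_self h4Bnn h4B
    have h2 : B * c ≤ 6*(e*c)*c := mul_le_mul_of_nonneg_right hBec hc.le
    have h3 : 0 ≤ (e*(c*c))*(e-1) :=
      mul_nonneg (mul_nonneg hepos.le (mul_nonneg hc.le hc.le)) (by linarith)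
    nlinarith [hm, h2, h3, hecc]
  refine ⟨c, hc, c, hc, ?_⟩
  intro x hx γ hγsym hγC hγhat
  -- facts about x
  have hxn : (0:ℝ) ≤ ‖x‖ := norm_nonneg x
  have hX : (∑ i : Fin d, (x i)^2) = ‖x‖^2 := by
    rw [EuclideanSpace.norm_eq, Real.sq_sqrt (by positivity)]
    simp [Real.norm_eq_abs, sq_abs]
  have hXc : (∑ i : Fin d, (x i)^2) ≤ c^2 := by
    rw [hX]
    have := mul_le_mul hx.le hx.le hxn hc.le
    nlinarith [this]
  set a2 := hatSq d₀ x with ha2d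
  set t2 := tildeSq d₀ x with ht2d
  have ha2nn : 0 ≤ a2 := by
    rw [ha2d, hatSq]
    exact Finset.sum_nonneg fun i _ => by by_cases h : d₀ ≤ (i:ℕ) <;> simp [h, sq_nonneg]
  have ht2nn : 0 ≤ t2 := by
    rw [ht2d, tildeSq]
    exact Finset.sum_nonneg fun i _ => by by_cases h : (i:ℕ) < d₀ <;> simp [h, sq_nonneg]
  have hsplitx : t2 + a2 = ∑ i : Fin d, (x i)^2 := by
    rw [ht2d, ha2d, tildeSq, hatSq, ← Finset.sum_add_distrib]
    refine Finset.sum_congr rfl fun i _ => ?_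
    by_cases h : (i:ℕ) < d₀ <;> simp [h, Nat.not_le.mpr, Nat.not_lt.mp]
  have ha2c : a2 ≤ c^2 := by linarith [hsplitx, hXc, ht2nn]
  have ht2c : t2 ≤ c^2 := by linarith [hsplitx, hXc, ha2nn]
  set a := Real.sqrt a2 with ha_def
  have hann : 0 ≤ a := Real.sqrt_nonneg _
  have ha2a : a^2 = a2 := Real.sq_sqrt ha2nn
  have hac : a ≤ c := by
    rw [ha_def]
    calc Real.sqrt a2 ≤ Real.sqrt (c^2) := Real.sqrt_le_sqrt ha2c
      _ = c := Real.sqrt_sq hc.le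
  have hxkc : ∀ k : Fin d, |x k| ≤ c := by
    intro k
    have h1 : (x k)^2 ≤ c^2 :=
      le_trans (Finset.single_le_sum (f := fun i : Fin d => (x i)^2)
        (fun i _ => sq_nonneg _) (Finset.mem_univ k)) hXc
    have h3 := Real.sqrt_le_sqrt h1
    rwa [Real.sqrt_sq_eq_abs, Real.sqrt_sq hc.le] at h3
  have hxka : ∀ k : Fin d, d₀ ≤ (k:ℕ) → |x k| ≤ a := by
    intro k hk
    have h1 : (x k)^2 ≤ a2 := by
      have := Finset.single_le_sum
        (f := fun i : Fin d => if d₀ ≤ (i:ℕ) then (x i)^2 else 0)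
        (fun i _ => by by_cases h : d₀ ≤ (i:ℕ) <;> simp [h, sq_nonneg])
        (Finset.mem_univ k)
      simp only [if_pos hk] at this
      rw [ha2d, hatSq]; exact this
    have h3 := Real.sqrt_le_sqrt h1
    rwa [Real.sqrt_sq_eq_abs, ← ha_def] at h3
  -- gradient bounds
  have hGlt : ∀ k : Fin d, (k:ℕ) < d₀ → |gradFc c d₀ x k| ≤ c * a2 := by
    intro k hk
    rw [gradFc, if_pos hk, abs_mul, ← ha2d, abs_of_nonneg ha2nn]
    exact mul_le_mul_of_nonneg_right (hxkc k) ha2nn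
  have hGge : ∀ k : Fin d, d₀ ≤ (k:ℕ) → |gradFc c d₀ x k| ≤ a * (c + c^2) := by
    intro k hk
    rw [gradFc, if_neg (Nat.not_lt.mpr hk), abs_mul, ← ht2d]
    have h2 : |c + t2| ≤ c + c^2 := by
      rw [abs_of_nonneg (by linarith)]; linarith
    exact mul_le_mul (hxka k hk) h2 (abs_nonneg _) hann
  have hGall : ∀ k : Fin d, |gradFc c d₀ x k| ≤ (c + 2*c^2) * a := by
    intro k
    by_cases hk : (k:ℕ) < d₀
    · calc |gradFc c d₀ x k| ≤ c * a2 := hGlt k hk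
        _ ≤ (c + 2*c^2) * a := by
            nlinarith [mul_nonneg (mul_nonneg hc.le hann) (sub_nonneg.2 hac),
              mul_nonneg hc.le hann, mul_nonneg (mul_nonneg hc.le hc.le) hann, ha2a]
    · calc |gradFc c d₀ x k| ≤ a * (c + c^2) := hGge k (Nat.not_lt.mp hk)
        _ ≤ (c + 2*c^2) * a := by
            nlinarith [mul_nonneg (mul_nonneg hc.le hc.le) hann]
  -- bounds on the Christoffel correction terms
  have hccnn : (0:ℝ) ≤ 2*c + c^2 := by positivity
  have hccnn2 : (0:ℝ) ≤ c + 2*c^2 := by positivity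
  set E1 : ℝ := (d:ℝ) * (C * (2*c + c^2)) with hE1_def
  set E2 : ℝ := (d:ℝ) * (C * (c + 2*c^2)) with hE2_def
  have hE1nn : 0 ≤ E1 := by rw [hE1_def]; positivity
  have hE2nn : 0 ≤ E2 := by rw [hE2_def]; positivity
  have he1b : ∀ i j : Fin d, (i:ℕ) < d₀ → (j:ℕ) < d₀ →
      |∑ k : Fin d, γ k i j * gradFc c d₀ x k| ≤ E1 * a2 := by
    intro i j hi hj
    calc |∑ k : Fin d, γ k i j * gradFc c d₀ x k|
        ≤ ∑ k : Fin d, |γ k i j * gradFc c d₀ x k| := Finset.abs_sum_le_sum_abs _ _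
      _ ≤ ∑ _k : Fin d, (C * (2*c + c^2)) * a2 := by
          refine Finset.sum_le_sum fun k _ => ?_
          rw [abs_mul]
          by_cases hk : (k:ℕ) < d₀
          · calc |γ k i j| * |gradFc c d₀ x k| ≤ C * (c * a2) :=
                mul_le_mul (hγC k i j) (hGlt k hk) (abs_nonneg _) hC.le
              _ ≤ (C * (2*c + c^2)) * a2 := by
                nlinarith [mul_nonneg (mul_nonneg hC.le ha2nn) hc.le,
                  mul_nonneg (mul_nonneg (mul_nonneg hC.le ha2nn) hc.le) hc.le]
          · calc |γ k i j| * |gradFc c d₀ x k| ≤ (C * a) * (a * (c + c^2)) :=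
                mul_le_mul (hγhat k i j hi hj (Nat.not_lt.mp hk))
                  (hGge k (Nat.not_lt.mp hk)) (abs_nonneg _)
                  (mul_nonneg hC.le hann)
              _ ≤ (C * (2*c + c^2)) * a2 := by
                rw [← ha2a]
                nlinarith [mul_nonneg (mul_nonneg hC.le hc.le) (sq_nonneg a)]
      _ = E1 * a2 := by rw [Finset.sum_const, Finset.card_univ, Fintype.card_fin,
            nsmul_eq_mul, hE1_def]; ring
  have he2b : ∀ i j : Fin d,
      |∑ k : Fin d, γ k i j * gradFc c d₀ x k| ≤ E2 * a := by
    intro i j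
    calc |∑ k : Fin d, γ k i j * gradFc c d₀ x k|
        ≤ ∑ k : Fin d, |γ k i j * gradFc c d₀ x k| := Finset.abs_sum_le_sum_abs _ _
      _ ≤ ∑ _k : Fin d, (C * ((c + 2*c^2) * a)) := by
          refine Finset.sum_le_sum fun k _ => ?_
          rw [abs_mul]
          exact mul_le_mul (hγC k i j) (hGall k) (abs_nonneg _) hC.le
      _ = E2 * a := by rw [Finset.sum_const, Finset.card_univ, Fintype.card_fin,
            nsmul_eq_mul, hE2_def]; ring
  -- the matrix and its symmetry
  have hHerm : (Matrix.of fun i j : Fin d =>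
      hessFc c d₀ x i j - ∑ k : Fin d, γ k i j * gradFc c d₀ x k).IsHermitian := by
    have hsymm : ∀ i j : Fin d, hessFc c d₀ x j i - ∑ k : Fin d, γ k j i * gradFc c d₀ x k
        = hessFc c d₀ x i j - ∑ k : Fin d, γ k i j * gradFc c d₀ x k := by
      intro i j
      have h1 : hessFc c d₀ x j i = hessFc c d₀ x i j := by
        rcases eq_or_ne i j with rfl | hij
        · rfl
        · have hji : j ≠ i := fun h => hij h.symm
          by_cases hi : (i:ℕ) < d₀ <;> by_cases hj : (j:ℕ) < d₀ <;>
            simp [hessFc, hi, hj, hij, hji] <;> ring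
      have h2 : ∑ k : Fin d, γ k j i * gradFc c d₀ x k
          = ∑ k : Fin d, γ k i j * gradFc c d₀ x k :=
        Finset.sum_congr rfl fun k _ => by rw [hγsym k j i]
      rw [h1, h2]
    exact Matrix.ext fun i j => by
      rw [Matrix.conjTranspose_apply]
      simp only [Matrix.of_apply, star_trivial]
      exact hsymm i j
  -- main quadratic lower bound
  have main : ∀ v : Fin d → ℝ,
      (1/4) * a2 * (∑ i : Fin d, if (i:ℕ) < d₀ then v i ^ 2 else 0)
        + (c/2) * (∑ i : Fin d, if d₀ ≤ (i:ℕ) then v i ^ 2 else 0)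
      ≤ dotProduct (star v) ((Matrix.of fun i j : Fin d =>
          hessFc c d₀ x i j - ∑ k : Fin d, γ k i j * gradFc c d₀ x k) *ᵥ v) := by
    intro v
    set P := ∑ i : Fin d, if (i:ℕ) < d₀ then v i ^ 2 else 0 with hP
    set Q2 := ∑ i : Fin d, if d₀ ≤ (i:ℕ) then v i ^ 2 else 0 with hQ2
    set T := ∑ i : Fin d, if (i:ℕ) < d₀ then x i * v i else 0 with hTd
    set U := ∑ i : Fin d, if d₀ ≤ (i:ℕ) then x i * v i else 0 with hUd
    set S1 := ∑ i : Fin d, if (i:ℕ) < d₀ then |v i| else 0 with hS1d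
    set S2 := ∑ i : Fin d, if d₀ ≤ (i:ℕ) then |v i| else 0 with hS2d
    have hPnn : 0 ≤ P := by
      rw [hP]; exact Finset.sum_nonneg fun i _ => by
        by_cases h : (i:ℕ) < d₀ <;> simp [h, sq_nonneg]
    have hQ2nn : 0 ≤ Q2 := by
      rw [hQ2]; exact Finset.sum_nonneg fun i _ => by
        by_cases h : d₀ ≤ (i:ℕ) <;> simp [h, sq_nonneg]
    have hS1nn : 0 ≤ S1 := by
      rw [hS1d]; exact Finset.sum_nonneg fun i _ => by
        by_cases h : (i:ℕ) < d₀ <;> simp [h, abs_nonneg]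
    have hS2nn : 0 ≤ S2 := by
      rw [hS2d]; exact Finset.sum_nonneg fun i _ => by
        by_cases h : d₀ ≤ (i:ℕ) <;> simp [h, abs_nonneg]
    set p := Real.sqrt P with hp_def
    set q := Real.sqrt Q2 with hq_def
    have hpnn : 0 ≤ p := Real.sqrt_nonneg _
    have hqnn : 0 ≤ q := Real.sqrt_nonneg _
    have hp2 : p^2 = P := Real.sq_sqrt hPnn
    have hq2 : q^2 = Q2 := Real.sq_sqrt hQ2nn
    -- expansion of the quadratic form
    have hexp : dotProduct (star v) ((Matrix.of fun i j : Fin d =>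
          hessFc c d₀ x i j - ∑ k : Fin d, γ k i j * gradFc c d₀ x k) *ᵥ v)
        = a2 * P + 4 * (T * U) + (c + t2) * Q2
          - ∑ i : Fin d, ∑ j : Fin d,
              v i * (∑ k : Fin d, γ k i j * gradFc c d₀ x k) * v j := by
      rw [quad_expand]
      have hstep : ∀ i j : Fin d,
          v i * (Matrix.of fun i j : Fin d =>
            hessFc c d₀ x i j - ∑ k : Fin d, γ k i j * gradFc c d₀ x k) i j * v j
          = v i * hessFc c d₀ x i j * v j
            - v i * (∑ k : Fin d, γ k i j * gradFc c d₀ x k) * v j := by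
        intro i j; simp only [Matrix.of_apply]; ring
      rw [Finset.sum_congr rfl fun i _ =>
        Finset.sum_congr rfl fun j _ => hstep i j]
      simp only [Finset.sum_sub_distrib]
      rw [quad_hess]
      rw [← ha2d, ← ht2d, ← hP, ← hQ2, ← hTd, ← hUd]
      ring
    -- Cauchy–Schwarz bounds
    have hTb : |T| ≤ c * p := by
      have e1 : T = ∑ i : Fin d, (if (i:ℕ) < d₀ then x i else 0)
          * (if (i:ℕ) < d₀ then v i else 0) := by
        rw [hTd]; exact Finset.sum_congr rfl fun i _ => by
          by_cases h : (i:ℕ) < d₀ <;> simp [h]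
      have e2 : t2 = ∑ i : Fin d, (if (i:ℕ) < d₀ then x i else 0)^2 := by
        rw [ht2d, tildeSq]; exact Finset.sum_congr rfl fun i _ => by
          by_cases h : (i:ℕ) < d₀ <;> simp [h]
      have e3 : P = ∑ i : Fin d, (if (i:ℕ) < d₀ then v i else 0)^2 := by
        rw [hP]; exact Finset.sum_congr rfl fun i _ => by
          by_cases h : (i:ℕ) < d₀ <;> simp [h]
      have hcs := Finset.sum_mul_sq_le_sq_mul_sq Finset.univ
        (fun i : Fin d => if (i:ℕ) < d₀ then x i else 0)
        (fun i : Fin d => if (i:ℕ) < d₀ then v i else 0)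
      rw [← e1, ← e2, ← e3] at hcs
      have h2 : T^2 ≤ (c*p)^2 := by
        rw [mul_pow, hp2]
        linarith [hcs, mul_nonneg (sub_nonneg.2 ht2c) hPnn]
      have h3 := Real.sqrt_le_sqrt h2
      rwa [Real.sqrt_sq_eq_abs, Real.sqrt_sq (mul_nonneg hc.le hpnn)] at h3
    have hUb : |U| ≤ a * q := by
      have e1 : U = ∑ i : Fin d, (if d₀ ≤ (i:ℕ) then x i else 0)
          * (if d₀ ≤ (i:ℕ) then v i else 0) := by
        rw [hUd]; exact Finset.sum_congr rfl fun i _ => by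
          by_cases h : d₀ ≤ (i:ℕ) <;> simp [h]
      have e2 : a2 = ∑ i : Fin d, (if d₀ ≤ (i:ℕ) then x i else 0)^2 := by
        rw [ha2d, hatSq]; exact Finset.sum_congr rfl fun i _ => by
          by_cases h : d₀ ≤ (i:ℕ) <;> simp [h]
      have e3 : Q2 = ∑ i : Fin d, (if d₀ ≤ (i:ℕ) then v i else 0)^2 := by
        rw [hQ2]; exact Finset.sum_congr rfl fun i _ => by
          by_cases h : d₀ ≤ (i:ℕ) <;> simp [h]
      have hcs := Finset.sum_mul_sq_le_sq_mul_sq Finset.univ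
        (fun i : Fin d => if d₀ ≤ (i:ℕ) then x i else 0)
        (fun i : Fin d => if d₀ ≤ (i:ℕ) then v i else 0)
      rw [← e1, ← e2, ← e3] at hcs
      have h2 : U^2 ≤ (a*q)^2 := by
        rw [mul_pow, hq2, ha2a]
        exact hcs
      have h3 := Real.sqrt_le_sqrt h2
      rwa [Real.sqrt_sq_eq_abs, Real.sqrt_sq (mul_nonneg hann hqnn)] at h3
    -- ℓ¹–ℓ² bounds
    have hS1p : S1^2 ≤ (d:ℝ) * P := by
      have e1 : S1 = ∑ i : Fin d, (if (i:ℕ) < d₀ then (1:ℝ) else 0)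
          * (if (i:ℕ) < d₀ then |v i| else 0) := by
        rw [hS1d]; exact Finset.sum_congr rfl fun i _ => by
          by_cases h : (i:ℕ) < d₀ <;> simp [h]
      have e2 : (∑ i : Fin d, (if (i:ℕ) < d₀ then (1:ℝ) else 0)^2) ≤ (d:ℝ) := by
        calc (∑ i : Fin d, (if (i:ℕ) < d₀ then (1:ℝ) else 0)^2)
            ≤ ∑ _i : Fin d, (1:ℝ) := Finset.sum_le_sum fun i _ => by
              by_cases h : (i:ℕ) < d₀ <;> simp [h]
          _ = (d:ℝ) := by simp
      have e3 : P = ∑ i : Fin d, (if (i:ℕ) < d₀ then |v i| else 0)^2 := by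
        rw [hP]; exact Finset.sum_congr rfl fun i _ => by
          by_cases h : (i:ℕ) < d₀ <;> simp [h, sq_abs]
      have hcs := Finset.sum_mul_sq_le_sq_mul_sq Finset.univ
        (fun i : Fin d => if (i:ℕ) < d₀ then (1:ℝ) else 0)
        (fun i : Fin d => if (i:ℕ) < d₀ then |v i| else 0)
      rw [← e1, ← e3] at hcs
      calc S1^2 ≤ (∑ i : Fin d, (if (i:ℕ) < d₀ then (1:ℝ) else 0)^2) * P := hcs
        _ ≤ (d:ℝ) * P := mul_le_mul_of_nonneg_right e2 hPnn
    have hS2q : S2^2 ≤ (d:ℝ) * Q2 := by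
      have e1 : S2 = ∑ i : Fin d, (if d₀ ≤ (i:ℕ) then (1:ℝ) else 0)
          * (if d₀ ≤ (i:ℕ) then |v i| else 0) := by
        rw [hS2d]; exact Finset.sum_congr rfl fun i _ => by
          by_cases h : d₀ ≤ (i:ℕ) <;> simp [h]
      have e2 : (∑ i : Fin d, (if d₀ ≤ (i:ℕ) then (1:ℝ) else 0)^2) ≤ (d:ℝ) := by
        calc (∑ i : Fin d, (if d₀ ≤ (i:ℕ) then (1:ℝ) else 0)^2)
            ≤ ∑ _i : Fin d, (1:ℝ) := Finset.sum_le_sum fun i _ => by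
              by_cases h : d₀ ≤ (i:ℕ) <;> simp [h]
          _ = (d:ℝ) := by simp
      have e3 : Q2 = ∑ i : Fin d, (if d₀ ≤ (i:ℕ) then |v i| else 0)^2 := by
        rw [hQ2]; exact Finset.sum_congr rfl fun i _ => by
          by_cases h : d₀ ≤ (i:ℕ) <;> simp [h, sq_abs]
      have hcs := Finset.sum_mul_sq_le_sq_mul_sq Finset.univ
        (fun i : Fin d => if d₀ ≤ (i:ℕ) then (1:ℝ) else 0)
        (fun i : Fin d => if d₀ ≤ (i:ℕ) then |v i| else 0)
      rw [← e1, ← e3] at hcs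
      calc S2^2 ≤ (∑ i : Fin d, (if d₀ ≤ (i:ℕ) then (1:ℝ) else 0)^2) * Q2 := hcs
        _ ≤ (d:ℝ) * Q2 := mul_le_mul_of_nonneg_right e2 hQ2nn
    have hS1p' : S1 ≤ Real.sqrt d * p := by
      have h2 : S1^2 ≤ (Real.sqrt d * p)^2 := by
        rw [mul_pow, Real.sq_sqrt hdnn, hp2]; exact hS1p
      have h3 := Real.sqrt_le_sqrt h2
      rwa [Real.sqrt_sq_eq_abs, abs_of_nonneg hS1nn,
        Real.sqrt_sq (mul_nonneg (Real.sqrt_nonneg _) hpnn)] at h3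
    have hS2q' : S2 ≤ Real.sqrt d * q := by
      have h2 : S2^2 ≤ (Real.sqrt d * q)^2 := by
        rw [mul_pow, Real.sq_sqrt hdnn, hq2]; exact hS2q
      have h3 := Real.sqrt_le_sqrt h2
      rwa [Real.sqrt_sq_eq_abs, abs_of_nonneg hS2nn,
        Real.sqrt_sq (mul_nonneg (Real.sqrt_nonneg _) hqnn)] at h3
    -- error bound
    have herr := err_bound d₀ v
      (fun i j => ∑ k : Fin d, γ k i j * gradFc c d₀ x k)
      (E1 * a2) (E2 * a) (mul_nonneg hE1nn ha2nn) (mul_nonneg hE2nn hann)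
      (fun i j hi hj => he1b i j hi hj) (fun i j => he2b i j)
    rw [← hS1d, ← hS2d] at herr
    have herr2 : |∑ i : Fin d, ∑ j : Fin d,
        v i * (∑ k : Fin d, γ k i j * gradFc c d₀ x k) * v j|
        ≤ (1/2) * a^2 * p^2 + B * a * (p*q) + B * a * q^2 := by
      have hb1 : (E1 * a2) * S1^2 ≤ (1/2) * a^2 * p^2 := by
        calc (E1 * a2) * S1^2 ≤ (E1 * a2) * ((d:ℝ) * P) :=
            mul_le_mul_of_nonneg_left hS1p (mul_nonneg hE1nn ha2nn)
          _ = ((d:ℝ) * E1) * a2 * P := by ring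
          _ ≤ (1/2) * a2 * P := by
              refine mul_le_mul_of_nonneg_right
                (mul_le_mul_of_nonneg_right ?_ ha2nn) hPnn
              rw [hE1_def]; exact hN1
          _ = (1/2) * a^2 * p^2 := by rw [ha2a, hp2]
      have hsqd : Real.sqrt d * Real.sqrt d = (d:ℝ) := Real.mul_self_sqrt hdnn
      have hb2 : 2 * (E2 * a) * (S1 + S2) * S2
          ≤ B * a * (p*q) + B * a * q^2 := by
        have hstep1 : 2 * (E2 * a) * (S1 + S2) * S2
            ≤ 2 * (E2 * a) * (Real.sqrt d * p + Real.sqrt d * q) * (Real.sqrt d * q) := by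
          have hnn : 0 ≤ 2 * (E2 * a) := by positivity
          have h1 : (S1 + S2) ≤ Real.sqrt d * p + Real.sqrt d * q := by
            exact add_le_add hS1p' hS2q'
          calc 2 * (E2 * a) * (S1 + S2) * S2
              ≤ 2 * (E2 * a) * (S1 + S2) * (Real.sqrt d * q) := by
                refine mul_le_mul_of_nonneg_left hS2q' ?_
                exact mul_nonneg hnn (by linarith [hS1nn, hS2nn])
            _ ≤ 2 * (E2 * a) * (Real.sqrt d * p + Real.sqrt d * q) * (Real.sqrt d * q) := by
                refine mul_le_mul_of_nonneg_right
                  (mul_le_mul_of_nonneg_left h1 hnn) ?_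
                exact mul_nonneg (Real.sqrt_nonneg _) hqnn
        have hstep2 : 2 * (E2 * a) * (Real.sqrt d * p + Real.sqrt d * q) * (Real.sqrt d * q)
            = B * a * (p*q) + B * a * q^2 := by
          have hBE : B = 2 * (d:ℝ) * E2 := by rw [hB_def, hE2_def]; try ring
          have expand : 2 * (E2 * a) * (Real.sqrt d * p + Real.sqrt d * q) * (Real.sqrt d * q)
              = 2 * E2 * a * ((Real.sqrt d * Real.sqrt d) * (p * q)
                + (Real.sqrt d * Real.sqrt d) * q^2) := by ring
          rw [expand, hsqd, hBE]
          ring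
        linarith [hstep1, hstep2.le, hstep2.ge]
      calc |∑ i : Fin d, ∑ j : Fin d,
          v i * (∑ k : Fin d, γ k i j * gradFc c d₀ x k) * v j|
          ≤ (E1 * a2) * S1^2 + 2 * (E2 * a) * (S1 + S2) * S2 := herr
        _ ≤ (1/2) * a^2 * p^2 + (B * a * (p*q) + B * a * q^2) := add_le_add hb1 hb2
        _ = (1/2) * a^2 * p^2 + B * a * (p*q) + B * a * q^2 := by ring
    -- apply the key inequality
    set t := Real.sqrt t2 with ht_def
    have ht2t : t^2 = t2 := Real.sq_sqrt ht2nn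
    have hkey := key_ineq c c a t p q T U
      (∑ i : Fin d, ∑ j : Fin d, v i * (∑ k : Fin d, γ k i j * gradFc c d₀ x k) * v j)
      B hann hpnn hqnn hac hBnn hTb hUb herr2 hN2
    rw [hexp, ← ha2a, ← hp2, ← hq2, ← ht2t]
    exact hkey
  -- conclusion
  have hlhs_nn : ∀ v : Fin d → ℝ,
      0 ≤ (1/4) * a2 * (∑ i : Fin d, if (i:ℕ) < d₀ then v i ^ 2 else 0)
        + (c/2) * (∑ i : Fin d, if d₀ ≤ (i:ℕ) then v i ^ 2 else 0) := by
    intro v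
    have h1 : 0 ≤ (∑ i : Fin d, if (i:ℕ) < d₀ then v i ^ 2 else 0) :=
      Finset.sum_nonneg fun i _ => by by_cases h : (i:ℕ) < d₀ <;> simp [h, sq_nonneg]
    have h2 : 0 ≤ (∑ i : Fin d, if d₀ ≤ (i:ℕ) then v i ^ 2 else 0) :=
      Finset.sum_nonneg fun i _ => by by_cases h : d₀ ≤ (i:ℕ) <;> simp [h, sq_nonneg]
    have := mul_nonneg (by linarith [ha2nn] : (0:ℝ) ≤ (1/4) * a2) h1
    have := mul_nonneg (by linarith [hc.le] : (0:ℝ) ≤ c/2) h2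
    linarith
  constructor
  · exact Matrix.PosSemidef.of_dotProduct_mulVec_nonneg hHerm (fun v => le_trans (hlhs_nn v) (main v))
  · rintro ⟨i0, hi0, hxi0⟩
    have ha2pos : 0 < a2 := by
      have h1 : 0 < (x i0)^2 := pow_two_pos_of_ne_zero hxi0
      have h2 : (x i0)^2 ≤ a2 := by
        have := Finset.single_le_sum
          (f := fun i : Fin d => if d₀ ≤ (i:ℕ) then (x i)^2 else 0)
          (fun i _ => by by_cases h : d₀ ≤ (i:ℕ) <;> simp [h, sq_nonneg])
          (Finset.mem_univ i0)
        simp only [if_pos hi0] at this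
        rw [ha2d, hatSq]; exact this
      linarith
    refine Matrix.PosDef.of_dotProduct_mulVec_pos hHerm (fun ⦃v⦄ hv => ?_)
    have hmv := main v
    set P := ∑ i : Fin d, if (i:ℕ) < d₀ then v i ^ 2 else 0 with hP
    set Q2 := ∑ i : Fin d, if d₀ ≤ (i:ℕ) then v i ^ 2 else 0 with hQ2
    have hPnn : 0 ≤ P := by
      rw [hP]; exact Finset.sum_nonneg fun i _ => by
        by_cases h : (i:ℕ) < d₀ <;> simp [h, sq_nonneg]
    have hQ2nn : 0 ≤ Q2 := by
      rw [hQ2]; exact Finset.sum_nonneg fun i _ => by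
        by_cases h : d₀ ≤ (i:ℕ) <;> simp [h, sq_nonneg]
    obtain ⟨i1, hvi1⟩ := Function.ne_iff.mp hv
    have hPQ : P + Q2 = ∑ i : Fin d, v i ^ 2 := by
      rw [hP, hQ2, ← Finset.sum_add_distrib]
      refine Finset.sum_congr rfl fun i _ => ?_
      by_cases h : (i:ℕ) < d₀ <;> simp [h, Nat.not_le.mpr, Nat.not_lt.mp]
    have hsumpos : 0 < P + Q2 := by
      rw [hPQ]
      exact lt_of_lt_of_le (pow_two_pos_of_ne_zero hvi1)
        (Finset.single_le_sum (f := fun i : Fin d => v i ^ 2)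
          (fun i _ => sq_nonneg _) (Finset.mem_univ i1))
    have hpos : 0 < (1/4) * a2 * P + (c/2) * Q2 := by
      rcases lt_or_eq_of_le hQ2nn with hQpos | hQ0
      · have k1 : 0 < (c/2) * Q2 := mul_pos (by linarith) hQpos
        have k2 : 0 ≤ (1/4) * a2 * P :=
          mul_nonneg (mul_nonneg (by norm_num) ha2nn) hPnn
        linarith
      · have hPpos : 0 < P := by rw [← hQ0] at hsumpos; linarith
        have k1 : 0 < (1/4) * a2 * P :=
          mul_pos (mul_pos (by norm_num) ha2pos) hPpos
        have k2 : 0 ≤ (c/2) * Q2 := mul_nonneg (by linarith) hQ2nn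
        linarith
    exact lt_of_lt_of_le hpos hmv
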